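/- Let Γ ⊂ ℝⁿ be a full rank lattice and W ⊂ ℝⁿ measurable such that ∑_{γ∈Γ} 1_W(x+γ) ≤ 1 for a.e. x (W packs by Γ-translations). Let V be a d-dimensional subspace such that Γ ∩ V is a lattice of rank d, and let F₀ be a fundamental domain of (Γ∩V) in V. Then for m_{n−d}-almost every y ∈ V⊥, m_d(W ∩ (y + V)) ≤ m_d(F₀). -/

import Mathlib

open MeasureTheory
open scoped ENNReal
open scoped NNReal RealInnerProductSpace

lemma hausdorff_eq_smul_volume (m : ℕ) :
    ∃ c : ℝ≥0∞, (μH[(m : ℝ)] : Measure (EuclideanSpace ℝ (Fin m))) = c • volume := by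
  haveI : IsFiniteMeasureOnCompacts (μH[(m : ℝ)] : Measure (EuclideanSpace ℝ (Fin m))) := by
    constructor
    intro K hK
    have hanti := PiLp.antilipschitzWith_ofLp 2 (fun _ : Fin m => ℝ)
    have h := hanti.le_hausdorffMeasure_image (by positivity : (0:ℝ) ≤ (m:ℝ)) K
    have hpi : (μH[(m : ℝ)] : Measure (Fin m → ℝ)) = volume := by
      simpa using (hausdorffMeasure_pi_real (ι := Fin m))
    rw [hpi] at h
    refine h.trans_lt ?_
    have h1 : ((((Fintype.card (Fin m) : ℝ≥0) ^ (1/(2:ℝ≥0∞)).toReal : ℝ≥0)) : ℝ≥0∞) ^ (m:ℝ) < ⊤ :=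
      ENNReal.rpow_lt_top_of_nonneg (by positivity) ENNReal.coe_ne_top
    have h2 : volume ((WithLp.equiv 2 (Fin m → ℝ)) '' K) < ⊤ :=
      (hK.image (PiLp.lipschitzWith_ofLp 2 _).continuous).measure_lt_top
    exact ENNReal.mul_lt_top h1 h2
  exact ⟨_, Measure.isAddLeftInvariant_eq_smul (μH[(m : ℝ)] : Measure (EuclideanSpace ℝ (Fin m))) volume⟩

lemma pack_le_cover {E : Type*} [NormedAddCommGroup E] [InnerProductSpace ℝ E]
    [FiniteDimensional ℝ E] [MeasurableSpace E] [BorelSpace E]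
    (S G T : Set E) (hS : MeasurableSet S) (Λ : Set E) (hΛ : Λ.Countable)
    (hT : volume T = 0)
    (hcover : ∀ v : E, ∃ g ∈ Λ, v - g ∈ G)
    (hdisj : ∀ v ∉ T, ∀ g₁ ∈ Λ, ∀ g₂ ∈ Λ, v + g₁ ∈ S → v + g₂ ∈ S → g₁ = g₂) :
    volume S ≤ volume G := by
  haveI := hΛ.to_subtype
  set G' := toMeasurable volume G with hG'
  have hGsub : G ⊆ G' := subset_toMeasurable _ _
  have hG'm : MeasurableSet G' := measurableSet_toMeasurable _ _
  have hcov' : S ⊆ ⋃ g : Λ, (S ∩ {v | v - (g : E) ∈ G'}) := by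
    intro v hv
    obtain ⟨g, hgΛ, hg⟩ := hcover v
    exact Set.mem_iUnion.2 ⟨⟨g, hgΛ⟩, hv, hGsub hg⟩
  have key : ∀ g : Λ, volume (S ∩ {v | v - (g : E) ∈ G'})
      = volume (((· + (g : E)) ⁻¹' S) ∩ G') := by
    intro g
    rw [← measure_preimage_add_right volume (g : E) (S ∩ {v | v - (g : E) ∈ G'})]
    congr 1
    ext v
    simp [Set.mem_preimage]
  calc volume S ≤ volume (⋃ g : Λ, (S ∩ {v | v - (g : E) ∈ G'})) := measure_mono hcov'
    _ ≤ ∑' g : Λ, volume (S ∩ {v | v - (g : E) ∈ G'}) := measure_iUnion_le _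
    _ = ∑' g : Λ, volume ((((· + (g : E)) ⁻¹' S) ∩ G')) := tsum_congr key
    _ = volume (⋃ g : Λ, (((· + (g : E)) ⁻¹' S) ∩ G')) := by
        refine (measure_iUnion₀ ?_ ?_).symm
        · intro g₁ g₂ hne
          refine measure_mono_null ?_ hT
          intro v hv
          simp only [Set.mem_inter_iff, Set.mem_preimage] at hv
          by_contra hvT
          exact hne (Subtype.ext (hdisj v hvT _ g₁.2 _ g₂.2 hv.1.1 hv.2.1))
        · intro g
          exact ((hS.preimage (measurable_add_const _)).inter hG'm).nullMeasurableSet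
    _ ≤ volume G' := measure_mono (by simp)
    _ = volume G := measure_toMeasurable G

set_option maxHeartbeats 1000000 in
/-- Let `Γ ⊂ ℝⁿ` be a full rank lattice and `W` measurable packing by `Γ`-translations
(for a.e. `x` at most one `γ ∈ Γ` satisfies `x + γ ∈ W`). Let `V` be a `d`-dimensional
subspace such that `Γ ∩ V` is a lattice of rank `d`, and let `F₀ ⊆ V` be a fundamental
domain of `Γ ∩ V` in `V`. Then for `m_{n−d}`-a.e. `y ∈ Vᗮ`,
`m_d(W ∩ (y + V)) ≤ m_d(F₀)`. -/
theorem stmt4 (n d : ℕ)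
    (L : EuclideanSpace ℝ (Fin n) ≃ₗ[ℝ] EuclideanSpace ℝ (Fin n))
    (Γ : Set (EuclideanSpace ℝ (Fin n)))
    (hΓ : Γ = Set.range fun k : Fin n → ℤ => L (WithLp.toLp 2 (fun i => (k i : ℝ))))
    (W : Set (EuclideanSpace ℝ (Fin n))) (hW : MeasurableSet W)
    (hpack : ∀ᵐ x : EuclideanSpace ℝ (Fin n), {γ ∈ Γ | x + γ ∈ W}.Subsingleton)
    (V : Submodule ℝ (EuclideanSpace ℝ (Fin n))) (hV : Module.finrank ℝ V = d)
    (hrank : ∃ b : Fin d → EuclideanSpace ℝ (Fin n),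
      (∀ i, b i ∈ Γ ∩ (V : Set (EuclideanSpace ℝ (Fin n)))) ∧
        Submodule.span ℝ (Set.range b) = V)
    (F₀ : Set (EuclideanSpace ℝ (Fin n)))
    (hF₀V : F₀ ⊆ (V : Set (EuclideanSpace ℝ (Fin n))))
    (hF₀ : ∀ v ∈ (V : Set (EuclideanSpace ℝ (Fin n))),
      ∃! γ, γ ∈ Γ ∩ (V : Set (EuclideanSpace ℝ (Fin n))) ∧ v - γ ∈ F₀) :
    ∀ᵐ y ∂(μH[((n - d : ℕ) : ℝ)]).restrict (Vᗮ : Set (EuclideanSpace ℝ (Fin n))),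
      μH[(d : ℝ)] (W ∩ ((y + ·) '' (V : Set (EuclideanSpace ℝ (Fin n))))) ≤ μH[(d : ℝ)] F₀ := by
  classical
  have hdn : d ≤ n := by
    have h1 := Submodule.finrank_le V
    rw [hV, finrank_euclideanSpace_fin] at h1
    exact h1
  have hVp : Module.finrank ℝ (Vᗮ) = n - d := by
    have h2 := Submodule.finrank_add_finrank_orthogonal (K := V)
    rw [hV, finrank_euclideanSpace_fin] at h2
    omega
  set k := n - d with hkdef
  let bV : OrthonormalBasis (Fin d) ℝ V := (stdOrthonormalBasis ℝ V).reindex (finCongr (by rw [hV]))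
  let bK : OrthonormalBasis (Fin k) ℝ (Vᗮ : Submodule ℝ (EuclideanSpace ℝ (Fin n))) :=
    (stdOrthonormalBasis ℝ (Vᗮ : Submodule ℝ (EuclideanSpace ℝ (Fin n)))).reindex (finCongr (by rw [hVp]))
  let f : Fin k ⊕ Fin d → (EuclideanSpace ℝ (Fin n)) := Sum.elim (fun j => ((bK j : Vᗮ) : (EuclideanSpace ℝ (Fin n)))) (fun i => ((bV i : V) : (EuclideanSpace ℝ (Fin n))))
  have honf : Orthonormal ℝ f := by
    rw [orthonormal_iff_ite]
    have hbV := bV.orthonormal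
    have hbK := bK.orthonormal
    rw [orthonormal_iff_ite] at hbV hbK
    rintro (j₁ | i₁) (j₂ | i₂)
    · simpa [f, Submodule.coe_inner] using hbK j₁ j₂
    · simp only [f, Sum.elim_inl, Sum.elim_inr]
      rw [if_neg (by simp)]
      rw [real_inner_comm]
      exact (Submodule.mem_orthogonal V _).1 (bK j₁).2 _ (bV i₂).2
    · simp only [f, Sum.elim_inl, Sum.elim_inr]
      rw [if_neg (by simp)]
      exact (Submodule.mem_orthogonal V _).1 (bK j₂).2 _ (bV i₁).2
    · simpa [f, Submodule.coe_inner] using hbV i₁ i₂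
  have hspan : ⊤ ≤ Submodule.span ℝ (Set.range f) := by
    rw [Set.Sum.elim_range]
    rw [Submodule.span_union]
    have h1 : Set.range (fun j => ((bK j : Vᗮ) : (EuclideanSpace ℝ (Fin n)))) = Vᗮ.subtype '' (Set.range bK) := by
      rw [← Set.range_comp]; rfl
    have h2 : Set.range (fun i => ((bV i : V) : (EuclideanSpace ℝ (Fin n)))) = V.subtype '' (Set.range bV) := by
      rw [← Set.range_comp]; rfl
    rw [h1, h2, Submodule.span_image, Submodule.span_image]
    have h3 : Submodule.span ℝ (Set.range bK) = ⊤ := by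
      have := bK.toBasis.span_eq
      rwa [bK.coe_toBasis] at this
    have h4 : Submodule.span ℝ (Set.range bV) = ⊤ := by
      have := bV.toBasis.span_eq
      rwa [bV.coe_toBasis] at this
    rw [h3, h4, Submodule.map_top, Submodule.map_top, Submodule.range_subtype,
      Submodule.range_subtype, sup_comm, Submodule.sup_orthogonal_of_hasOrthogonalProjection]
  let B : OrthonormalBasis (Fin k ⊕ Fin d) ℝ (EuclideanSpace ℝ (Fin n)) := OrthonormalBasis.mk honf hspan
  let ι₀ : EuclideanSpace ℝ (Fin d) → (EuclideanSpace ℝ (Fin n)) := fun v => ((bV.repr.symm v : V) : (EuclideanSpace ℝ (Fin n)))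
  let ι₁ : EuclideanSpace ℝ (Fin k) → (EuclideanSpace ℝ (Fin n)) := fun w => ((bK.repr.symm w : Vᗮ) : (EuclideanSpace ℝ (Fin n)))
  have hι₀ : Isometry ι₀ := V.subtypeₗᵢ.isometry.comp bV.repr.symm.isometry
  have hι₁ : Isometry ι₁ := Vᗮ.subtypeₗᵢ.isometry.comp bK.repr.symm.isometry
  let Φ : (Fin k → ℝ) × (Fin d → ℝ) → (EuclideanSpace ℝ (Fin n)) :=
    fun p => ι₁ ((WithLp.equiv 2 (Fin k → ℝ)).symm p.1) + ι₀ ((WithLp.equiv 2 (Fin d → ℝ)).symm p.2)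
  have hΦmp : MeasurePreserving Φ volume volume := by
    have mp1 := (volume_measurePreserving_sumPiEquivProdPi (fun _ : Fin k ⊕ Fin d => ℝ)).symm
    have mp2 := PiLp.volume_preserving_toLp (Fin k ⊕ Fin d)
    have mp3 := B.measurePreserving_repr_symm
    have := mp3.comp (mp2.comp mp1)
    convert this using 1
    funext p
    show Φ p = B.repr.symm _
    rw [← B.sum_repr_symm]
    rw [Fintype.sum_sum_type]
    have hBl : ∀ j, B (Sum.inl j) = ((bK j : Vᗮ) : (EuclideanSpace ℝ (Fin n))) := fun j => by
      simp [B, OrthonormalBasis.coe_mk, f]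
    have hBr : ∀ i, B (Sum.inr i) = ((bV i : V) : (EuclideanSpace ℝ (Fin n))) := fun i => by
      simp [B, OrthonormalBasis.coe_mk, f]
    have hval : ∀ s : Fin k ⊕ Fin d,
        ((WithLp.equiv 2 ((Fin k ⊕ Fin d) → ℝ)).symm
          ((MeasurableEquiv.sumPiEquivProdPi (fun _ : Fin k ⊕ Fin d => ℝ)).symm p)) s
          = Sum.elim p.1 p.2 s := by
      rintro (j | i) <;> rfl
    simp only [Function.comp_apply, hval, Sum.elim_inl, Sum.elim_inr, hBl, hBr]
    have e1 : ι₁ ((WithLp.equiv 2 (Fin k → ℝ)).symm p.1) = ∑ j, p.1 j • ((bK j : Vᗮ) : (EuclideanSpace ℝ (Fin n))) := by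
      show ((bK.repr.symm _ : Vᗮ) : (EuclideanSpace ℝ (Fin n))) = _
      rw [← bK.sum_repr_symm]
      push_cast
      simp
    have e2 : ι₀ ((WithLp.equiv 2 (Fin d → ℝ)).symm p.2) = ∑ i, p.2 i • ((bV i : V) : (EuclideanSpace ℝ (Fin n))) := by
      show ((bV.repr.symm _ : V) : (EuclideanSpace ℝ (Fin n))) = _
      rw [← bV.sum_repr_symm]
      push_cast
      simp
    show ι₁ _ + ι₀ _ = _
    rw [e1, e2]
    rfl
  -- basic facts about ι₀, ι₁
  have hι₀mem : ∀ v, ι₀ v ∈ V := fun v => (bV.repr.symm v).2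
  have hι₀inj : Function.Injective ι₀ := hι₀.injective
  have hι₀sub : ∀ a b, ι₀ (a - b) = ι₀ a - ι₀ b := fun a b => by
    simp only [ι₀, map_sub]; rfl
  have hι₀add : ∀ a b, ι₀ (a + b) = ι₀ a + ι₀ b := fun a b => by
    simp only [ι₀, map_add]; rfl
  have hι₀ran : Set.range ι₀ = (V : Set (EuclideanSpace ℝ (Fin n))) := by
    ext x
    constructor
    · rintro ⟨v, rfl⟩; exact hι₀mem v
    · intro hx; exact ⟨bV.repr ⟨x, hx⟩, by simp [ι₀]⟩
  -- the null set of packing failures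
  have hpackset : volume {x : (EuclideanSpace ℝ (Fin n)) | ¬ {γ ∈ Γ | x + γ ∈ W}.Subsingleton} = 0 :=
    ae_iff.1 hpack
  set M := toMeasurable volume {x : (EuclideanSpace ℝ (Fin n)) | ¬ {γ ∈ Γ | x + γ ∈ W}.Subsingleton} with hMdef
  have hMm : MeasurableSet M := measurableSet_toMeasurable _ _
  have hM0 : volume M = 0 := by rw [measure_toMeasurable]; exact hpackset
  have hMsup : ∀ x : (EuclideanSpace ℝ (Fin n)), x ∉ M → {γ ∈ Γ | x + γ ∈ W}.Subsingleton := by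
    intro x hx
    by_contra h
    exact hx (subset_toMeasurable _ _ h)
  have hΓc : Γ.Countable := hΓ ▸ Set.countable_range _
  -- Fubini
  have hprod0 : (volume.prod volume) (Φ ⁻¹' M) = 0 := by
    rw [← Measure.volume_eq_prod]
    rw [hΦmp.measure_preimage hMm.nullMeasurableSet]
    exact hM0
  have hae : ∀ᵐ a : Fin k → ℝ, volume {b : Fin d → ℝ | Φ (a, b) ∈ M} = 0 :=
    (Measure.measure_prod_null (hΦmp.measurable hMm)).1 hprod0
  have hAbad : volume {a : Fin k → ℝ | volume {b : Fin d → ℝ | Φ (a, b) ∈ M} ≠ 0} = 0 := by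
    simpa [ae_iff] using hae
  obtain ⟨c, hc⟩ := hausdorff_eq_smul_volume d
  -- the main slice estimate
  have main : ∀ y : (EuclideanSpace ℝ (Fin n)), volume {v : EuclideanSpace ℝ (Fin d) | y + ι₀ v ∈ M} = 0 →
      μH[(d:ℝ)] (W ∩ ((y + ·) '' (V : Set (EuclideanSpace ℝ (Fin n))))) ≤ μH[(d:ℝ)] F₀ := by
    intro y hT
    set S : Set (EuclideanSpace ℝ (Fin d)) := (fun v => y + ι₀ v) ⁻¹' W with hSdef
    have hScont : Continuous (fun v : EuclideanSpace ℝ (Fin d) => y + ι₀ v) :=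
      continuous_const.add hι₀.continuous
    have hSm : MeasurableSet S := hW.preimage hScont.measurable
    set G : Set (EuclideanSpace ℝ (Fin d)) := ι₀ ⁻¹' F₀ with hGdef
    have hvol : volume S ≤ volume G := by
      refine pack_le_cover S G _ hSm (ι₀ ⁻¹' Γ) (hΓc.preimage hι₀inj) hT ?_ ?_
      · intro v
        obtain ⟨γ, ⟨⟨hγΓ, hγV⟩, hγF⟩, -⟩ := hF₀ (ι₀ v) (hι₀mem v)
        have hγ : ι₀ (bV.repr ⟨γ, hγV⟩) = γ := by simp [ι₀]
        refine ⟨bV.repr ⟨γ, hγV⟩, ?_, ?_⟩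
        · show ι₀ _ ∈ Γ
          rw [hγ]; exact hγΓ
        · show ι₀ _ ∈ F₀
          rw [hι₀sub, hγ]; exact hγF
      · intro v hvT g₁ hg₁ g₂ hg₂ h1 h2
        have hx := hMsup (y + ι₀ v) hvT
        have e1 : y + ι₀ (v + g₁) = (y + ι₀ v) + ι₀ g₁ := by rw [hι₀add]; abel
        have e2 : y + ι₀ (v + g₂) = (y + ι₀ v) + ι₀ g₂ := by rw [hι₀add]; abel
        refine hι₀inj (hx ⟨hg₁, ?_⟩ ⟨hg₂, ?_⟩)
        · have := h1; rw [hSdef] at this; simpa [← e1] using this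
        · have := h2; rw [hSdef] at this; simpa [← e2] using this
    have hGw : W ∩ ((y + ·) '' (V : Set (EuclideanSpace ℝ (Fin n)))) = (fun v => y + ι₀ v) '' S := by
      rw [hSdef, Set.image_preimage_eq_inter_range]
      congr 1
      rw [← hι₀ran]
      ext x
      simp only [Set.mem_image, Set.mem_range]
      constructor
      · rintro ⟨z, ⟨v, rfl⟩, rfl⟩; exact ⟨v, rfl⟩
      · rintro ⟨v, rfl⟩; exact ⟨ι₀ v, ⟨v, rfl⟩, rfl⟩
    have hisoY : Isometry (fun v => y + ι₀ v) := by
      exact (IsometryEquiv.addLeft y).isometry.comp hι₀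
    have hF₀eq : F₀ = ι₀ '' G := by
      rw [hGdef, Set.image_preimage_eq_inter_range, hι₀ran]
      exact (Set.inter_eq_self_of_subset_left hF₀V).symm
    have hd0 : (0:ℝ) ≤ (d:ℝ) := Nat.cast_nonneg d
    calc μH[(d:ℝ)] (W ∩ ((y + ·) '' (V : Set (EuclideanSpace ℝ (Fin n)))))
        = μH[(d:ℝ)] S := by rw [hGw, hisoY.hausdorffMeasure_image (Or.inl hd0)]
      _ ≤ μH[(d:ℝ)] G := by
          rw [hc]
          simp only [Measure.smul_apply, smul_eq_mul]
          exact mul_le_mul_right hvol c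
      _ = μH[(d:ℝ)] F₀ := by rw [hF₀eq, hι₀.hausdorffMeasure_image (Or.inl hd0)]
  -- final wrap-up
  rw [ae_iff, Measure.restrict_apply' (Submodule.closed_of_finiteDimensional Vᗮ).measurableSet]
  obtain ⟨ck, hck⟩ := hausdorff_eq_smul_volume k
  set Abad := {a : Fin k → ℝ | volume {b : Fin d → ℝ | Φ (a, b) ∈ M} ≠ 0} with hAbaddef
  set X : Set (EuclideanSpace ℝ (Fin k)) :=
    (WithLp.equiv 2 (Fin k → ℝ)) ⁻¹' (toMeasurable volume Abad) with hXdef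
  have hsub : {y : (EuclideanSpace ℝ (Fin n)) | ¬ μH[(d:ℝ)] (W ∩ ((y + ·) '' (V : Set (EuclideanSpace ℝ (Fin n))))) ≤ μH[(d:ℝ)] F₀}
      ∩ (Vᗮ : Set (EuclideanSpace ℝ (Fin n))) ⊆ ι₁ '' X := by
    rintro y ⟨hbad, hyV⟩
    have hy1 : ι₁ (bK.repr ⟨y, hyV⟩) = y := by simp [ι₁]
    refine ⟨bK.repr ⟨y, hyV⟩, ?_, hy1⟩
    rw [hXdef, Set.mem_preimage]
    apply subset_toMeasurable
    rw [hAbaddef, Set.mem_setOf_eq]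
    intro h0
    apply hbad
    apply main y
    have hΦy : ∀ b : Fin d → ℝ,
        Φ (WithLp.equiv 2 (Fin k → ℝ) (bK.repr ⟨y, hyV⟩), b)
          = y + ι₀ ((WithLp.equiv 2 (Fin d → ℝ)).symm b) := by
      intro b
      show ι₁ ((WithLp.equiv 2 (Fin k → ℝ)).symm (WithLp.equiv 2 (Fin k → ℝ) (bK.repr ⟨y, hyV⟩)))
        + ι₀ _ = _
      rw [Equiv.symm_apply_apply, hy1]
    have hseteq : {b : Fin d → ℝ | Φ ((WithLp.equiv 2 (Fin k → ℝ)) (bK.repr ⟨y, hyV⟩), b) ∈ M}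
        = {b : Fin d → ℝ | y + ι₀ ((WithLp.equiv 2 (Fin d → ℝ)).symm b) ∈ M} :=
      Set.ext fun b => by simp only [Set.mem_setOf_eq, hΦy b]
    rw [hseteq] at h0
    -- transfer from pi coordinates to EuclideanSpace coordinates
    have hTb : MeasurableSet {b : Fin d → ℝ | y + ι₀ ((WithLp.equiv 2 (Fin d → ℝ)).symm b) ∈ M} := by
      refine hMm.preimage ?_
      exact (continuous_const.add (hι₀.continuous.comp
        (PiLp.continuousLinearEquiv 2 ℝ (fun _ : Fin d => ℝ)).symm.continuous)).measurable
    have this : volume ((WithLp.equiv 2 (Fin d → ℝ)) ⁻¹' _) = _ :=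
      (PiLp.volume_preserving_ofLp (Fin d)).measure_preimage hTb.nullMeasurableSet
    have heq : (WithLp.equiv 2 (Fin d → ℝ)) ⁻¹'
        {b : Fin d → ℝ | y + ι₀ ((WithLp.equiv 2 (Fin d → ℝ)).symm b) ∈ M}
        = {v : EuclideanSpace ℝ (Fin d) | y + ι₀ v ∈ M} := by
      ext v
      simp [Set.mem_preimage]
    rw [heq] at this
    rw [this, h0]
  refine le_antisymm (le_trans (measure_mono hsub) ?_) zero_le
  calc μH[(k:ℝ)] (ι₁ '' X)
      = μH[(k:ℝ)] X := hι₁.hausdorffMeasure_image (Or.inl (Nat.cast_nonneg k)) X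
    _ = ck * volume X := by rw [hck]; rfl
    _ = 0 := by
        have hXv : volume X = 0 := by
          rw [hXdef, (show volume ((WithLp.equiv 2 (Fin k → ℝ)) ⁻¹' toMeasurable volume Abad)
              = volume (toMeasurable volume Abad) from
            (PiLp.volume_preserving_ofLp (Fin k)).measure_preimage
            (measurableSet_toMeasurable _ _).nullMeasurableSet), measure_toMeasurable]
          exact hAbad
        rw [hXv, mul_zero]
    _ ≤ 0 := le_rfl
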